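/- For n ≥ 6, the automorphism group of the spined cube SQ_n contains a subgroup isomorphic to (Z/2)^{n-2} that acts semiregularly on the vertex set with exactly 4 orbits (i.e., SQ_n is a 4-Cayley graph of (Z/2)^{n-2}). -/

import Mathlib

/-- The "difference vector" of the neighbor rules of the spined cube, `i` being the
0-based index of the flipped bit. -/
def sqDelta (n : ℕ) (x : Fin n → ZMod 2) (i : Fin n) : Fin n → ZMod 2 :=
  fun j =>
    (if j = i then 1 else 0) +
    (if i.val + 5 ≤ n then
      (if j.val = i.val + 1 then x ⟨n - 2, by have := i.isLt; omega⟩ else 0) +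
      (if j.val = i.val + 2 then x ⟨n - 1, by have := i.isLt; omega⟩ else 0)
    else if n ≤ i.val + 2 then 0
    else (if j.val = i.val + 1 then x ⟨n - 1, by have := i.isLt; omega⟩ else 0))

/-- The `n`-dimensional spined cube `SQ_n`. -/
def spinedCube (n : ℕ) : SimpleGraph (Fin n → ZMod 2) :=
  SimpleGraph.fromRel (fun x y => ∃ i : Fin n, y = x + sqDelta n x i)
/-- Extension by zero of a vector on the first `n-2` coordinates. -/
def sqEmb (n : ℕ) (w : Fin (n - 2) → ZMod 2) : Fin n → ZMod 2 :=
  fun j => if h : j.val < n - 2 then w ⟨j.val, h⟩ else 0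

lemma sqEmb_add (n : ℕ) (w w' : Fin (n - 2) → ZMod 2) :
    sqEmb n (w + w') = sqEmb n w + sqEmb n w' := by
  funext j
  simp only [sqEmb, Pi.add_apply]
  split <;> simp

lemma sqEmb_zero (n : ℕ) : sqEmb n 0 = 0 := by
  funext j; simp [sqEmb]

lemma sqEmb_hi (n : ℕ) (w : Fin (n - 2) → ZMod 2) {m : ℕ} (hm : m < n)
    (h : n - 2 ≤ m) : sqEmb n w ⟨m, hm⟩ = 0 := dif_neg (by simp only [Fin.val_mk]; omega)

lemma sqEmb_inj (n : ℕ) : Function.Injective (sqEmb n) := by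
  intro w w' h
  funext j
  have hj : j.val < n := by have := j.isLt; omega
  have := congrFun h ⟨j.val, hj⟩
  simpa [sqEmb, j.isLt, Fin.ext_iff] using this

lemma sqDelta_shift (n : ℕ) (w : Fin (n - 2) → ZMod 2) (x : Fin n → ZMod 2)
    (i : Fin n) : sqDelta n (sqEmb n w + x) i = sqDelta n x i := by
  funext j
  simp only [sqDelta, Pi.add_apply]
  rw [sqEmb_hi n w _ (le_refl _), sqEmb_hi n w _ (by omega), zero_add, zero_add]

/-- For `n ≥ 6`, `SQ_n` is a 4-Cayley graph of `(ℤ/2)^{n-2}`: its automorphism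
group contains a subgroup isomorphic to `(ℤ/2)^{n-2}` acting semiregularly on the
vertices with exactly 4 orbits. -/
theorem spinedCube_is_fourCayley (n : ℕ) (hn : 6 ≤ n) :
    ∃ G : Subgroup (Equiv.Perm (Fin n → ZMod 2)),
      Nonempty (G ≃* Multiplicative (Fin (n - 2) → ZMod 2)) ∧
      (∀ g ∈ G, ∀ x y, (spinedCube n).Adj x y ↔ (spinedCube n).Adj (g x) (g y)) ∧
      (∀ g ∈ G, ∀ x, g x = x → g = 1) ∧
      ({s : Set (Fin n → ZMod 2) |
        ∃ x, s = {y | ∃ g ∈ G, g x = y}}).ncard = 4 := by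
  classical
  -- the homomorphism
  set f : Multiplicative (Fin (n - 2) → ZMod 2) →* Equiv.Perm (Fin n → ZMod 2) :=
    { toFun := fun w => Equiv.addLeft (sqEmb n w.toAdd)
      map_one' := by
        ext x
        simp [sqEmb_zero]
      map_mul' := by
        intro a b
        ext x
        simp [sqEmb_add, add_assoc] } with hf
  have hfinj : Function.Injective f := by
    intro a b hab
    have : sqEmb n a.toAdd + 0 = sqEmb n b.toAdd + 0 := congrArg (fun g => g.toFun 0) hab
    exact Multiplicative.toAdd.injective (sqEmb_inj n (by simpa using this))
  refine ⟨f.range, ⟨(MonoidHom.ofInjective hfinj).symm⟩, ?_, ?_, ?_⟩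
  · -- automorphism
    rintro g ⟨w, rfl⟩ x y
    have key : ∀ x y : Fin n → ZMod 2,
        (∃ i, y = x + sqDelta n x i) ↔
        (∃ i, sqEmb n w.toAdd + y = (sqEmb n w.toAdd + x) + sqDelta n (sqEmb n w.toAdd + x) i) := by
      intro x y
      constructor
      · rintro ⟨i, rfl⟩
        exact ⟨i, by rw [sqDelta_shift, add_assoc]⟩
      · rintro ⟨i, h⟩
        rw [sqDelta_shift, add_assoc] at h
        exact ⟨i, add_left_cancel h⟩
    have hne : x ≠ y ↔ (f w) x ≠ (f w) y := by
      constructor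
      · exact fun h h2 => h ((f w).injective h2)
      · exact fun h h2 => h (by rw [h2])
    simp only [spinedCube, SimpleGraph.fromRel_adj]
    constructor
    · rintro ⟨h1, h2⟩
      refine ⟨hne.1 h1, ?_⟩
      rcases h2 with h2 | h2
      · exact Or.inl ((key x y).1 h2)
      · exact Or.inr ((key y x).1 h2)
    · rintro ⟨h1, h2⟩
      refine ⟨hne.2 h1, ?_⟩
      rcases h2 with h2 | h2
      · exact Or.inl ((key x y).2 h2)
      · exact Or.inr ((key y x).2 h2)
  · -- semiregular
    rintro g ⟨w, rfl⟩ x hx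
    have : sqEmb n w.toAdd + x = x := hx
    have hw : sqEmb n w.toAdd = 0 := by
      have := congrArg (fun z => z - x) this
      simpa using this
    have : w.toAdd = 0 := sqEmb_inj n (by rw [hw, sqEmb_zero])
    have hw1 : w = 1 := this
    rw [hw1, map_one]
  · -- 4 orbits
    have h2 : n - 2 < n := by omega
    have h1 : n - 1 < n := by omega
    -- orbit characterization
    have orbchar : ∀ x : Fin n → ZMod 2,
        {y | ∃ g ∈ f.range, g x = y} =
        {y : Fin n → ZMod 2 | y ⟨n - 2, h2⟩ = x ⟨n - 2, h2⟩ ∧ y ⟨n - 1, h1⟩ = x ⟨n - 1, h1⟩} := by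
      intro x
      ext y
      constructor
      · rintro ⟨g, ⟨w, rfl⟩, rfl⟩
        constructor
        · show (sqEmb n w.toAdd + x) _ = _
          simp [sqEmb_hi n w.toAdd h2 (le_refl _)]
        · show (sqEmb n w.toAdd + x) _ = _
          simp [sqEmb_hi n w.toAdd h1 (by omega)]
      · rintro ⟨hy2, hy1⟩
        refine ⟨f (Multiplicative.ofAdd (fun j => y ⟨j.val, by have := j.isLt; omega⟩ -
            x ⟨j.val, by have := j.isLt; omega⟩)), ⟨_, rfl⟩, ?_⟩
        show sqEmb n _ + x = y
        funext j
        simp only [Pi.add_apply, sqEmb]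
        by_cases hj : j.val < n - 2
        · rw [dif_pos hj]
          have : (⟨j.val, by have := j.isLt; omega⟩ : Fin n) = j := rfl
          simp [this]
        · rw [dif_neg hj, zero_add]
          have : j.val = n - 2 ∨ j.val = n - 1 := by have := j.isLt; omega
          rcases this with h | h
          · have hjeq : j = ⟨n - 2, h2⟩ := by exact Fin.ext h
            rw [hjeq, hy2]
          · have hjeq : j = ⟨n - 1, h1⟩ := by exact Fin.ext h
            rw [hjeq, hy1]
    -- now compute the set of orbits
    set T : ZMod 2 × ZMod 2 → Set (Fin n → ZMod 2) :=
      fun p => {y | y ⟨n - 2, h2⟩ = p.1 ∧ y ⟨n - 1, h1⟩ = p.2} with hT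
    have base : ∀ p : ZMod 2 × ZMod 2, ∃ z : Fin n → ZMod 2,
        z ⟨n - 2, h2⟩ = p.1 ∧ z ⟨n - 1, h1⟩ = p.2 := by
      intro p
      refine ⟨fun j => if j.val = n - 2 then p.1 else if j.val = n - 1 then p.2 else 0, ?_, ?_⟩
      · simp
      · show (if n - 1 = n - 2 then p.1 else if n - 1 = n - 1 then p.2 else 0) = p.2
        rw [if_neg (by omega), if_pos rfl]
    have hset : {s : Set (Fin n → ZMod 2) | ∃ x, s = {y | ∃ g ∈ f.range, g x = y}} =
        Set.range T := by
      ext s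
      constructor
      · rintro ⟨x, rfl⟩
        exact ⟨(x ⟨n - 2, h2⟩, x ⟨n - 1, h1⟩), by rw [orbchar x]⟩
      · rintro ⟨p, rfl⟩
        obtain ⟨z, hz1, hz2⟩ := base p
        exact ⟨z, by rw [orbchar z, hz1, hz2]⟩
    rw [hset]
    have hTinj : Function.Injective T := by
      intro p q hpq
      obtain ⟨z, hz1, hz2⟩ := base p
      have hzp : z ∈ T p := ⟨hz1, hz2⟩
      rw [hpq] at hzp
      obtain ⟨hq1, hq2⟩ := hzp
      exact Prod.ext (by rw [← hq1, hz1]) (by rw [← hq2, hz2])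
    rw [← Set.image_univ, Set.ncard_image_of_injective _ hTinj, Set.ncard_univ]
    simp [Nat.card_eq_fintype_card]
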